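/- arXiv:math/0411392 — 2 statements merged into one kernel-verified Lean document; each statement's English description precedes it below -/
import Mathlib

section
/- Suppose the Verblunsky coefficients satisfy |α_n| ≤ C q^n for all n ≥ 0, where C > 0 and q ∈ (0,1). Then for every z with |z| > q, lim_{n→∞} z^{-n} Φ_n(z) = conj(S(1/conj(z))); note that |1/conj(z)| < 1/q so the right-hand side is defined. -/
open Polynomial Filter Topology

/-- The monic orthogonal polynomials on the unit circle, defined by the Szegő
recursion `Φ₀ = 1`, `Φ_{n+1}(z) = z Φ_n(z) - conj(α_n) Φ_n^*(z)`, where the reversed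
polynomial is `P^*(z) = Σ_{j=0}^n conj(c_{n-j}) z^j`. -/
noncomputable def PhiP (α : ℕ → ℂ) : ℕ → Polynomial ℂ
  | 0 => 1
  | n + 1 => X * PhiP α n -
      Polynomial.C ((starRingEnd ℂ) (α n)) *
        Polynomial.reflect n (Polynomial.map (starRingEnd ℂ) (PhiP α n))

/-- The reversed polynomial `Φ_n^*(z) = z^n conj(Φ_n(1/conj z))`. -/
noncomputable def PhiStarP (α : ℕ → ℂ) (n : ℕ) : Polynomial ℂ :=
  Polynomial.reflect n (Polynomial.map (starRingEnd ℂ) (PhiP α n))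

lemma natDegree_reflect_le' {P : Polynomial ℂ} {n : ℕ} (h : P.natDegree ≤ n) :
    (Polynomial.reflect n P).natDegree ≤ n := by
  rw [Polynomial.natDegree_le_iff_coeff_eq_zero]
  intro m hm
  rw [Polynomial.coeff_reflect, Polynomial.revAt_eq_self_of_lt hm]
  exact Polynomial.coeff_eq_zero_of_natDegree_lt (lt_of_le_of_lt h hm)

lemma phiP_natDegree_le (α : ℕ → ℂ) : ∀ n, (PhiP α n).natDegree ≤ n := by
  intro n
  induction n with
  | zero => simp [PhiP]
  | succ n ih =>
    have h1 : (X * PhiP α n).natDegree ≤ n + 1 := by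
      refine (Polynomial.natDegree_mul_le).trans ?_
      simp only [Polynomial.natDegree_X]
      omega
    have h2 : (Polynomial.C ((starRingEnd ℂ) (α n)) *
        Polynomial.reflect n (Polynomial.map (starRingEnd ℂ) (PhiP α n))).natDegree ≤ n + 1 := by
      refine (Polynomial.natDegree_mul_le).trans ?_
      have : (Polynomial.map (starRingEnd ℂ) (PhiP α n)).natDegree ≤ n :=
        Polynomial.natDegree_map_le.trans ih
      simpa using (natDegree_reflect_le' this).trans (Nat.le_succ n)
    exact (Polynomial.natDegree_sub_le _ _).trans (max_le h1 h2)

theorem stmt_5 (α : ℕ → ℂ) (hα : ∀ n, ‖α n‖ < 1)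
    (C q : ℝ) (hC : 0 < C) (hq0 : 0 < q) (hq1 : q < 1)
    (hdecay : ∀ n : ℕ, ‖α n‖ ≤ C * q ^ n)
    (S : ℂ → ℂ)
    (hS : ∀ z : ℂ, ‖z‖ < 1 / q →
      Tendsto (fun n : ℕ => (PhiStarP α n).eval z) atTop (nhds (S z))) :
    ∀ z : ℂ, q < ‖z‖ →
      Tendsto (fun n : ℕ => (PhiP α n).eval z / z ^ n) atTop
        (nhds ((starRingEnd ℂ) (S (((starRingEnd ℂ) z)⁻¹)))) := by
  intro z hz
  have hz0 : z ≠ 0 := by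
    intro h; rw [h] at hz; simp at hz; linarith
  set w : ℂ := ((starRingEnd ℂ) z)⁻¹ with hw
  have hcz : (starRingEnd ℂ) z ≠ 0 := by simpa using hz0
  have hwabs : ‖w‖ < 1 / q := by
    rw [hw, norm_inv, Complex.norm_conj]
    rw [div_eq_inv_mul, mul_one]
    exact by simpa using (inv_strictAnti₀ hq0 hz)
  -- key identity
  have key : ∀ n, (PhiP α n).eval z / z ^ n =
      (starRingEnd ℂ) ((PhiStarP α n).eval w) := by
    intro n
    have hInv : Invertible ((starRingEnd ℂ) z) := invertibleOfNonzero hcz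
    have hdeg : (PhiP α n).natDegree ≤ n := phiP_natDegree_le α n
    have h := Polynomial.eval₂_reflect_mul_pow (starRingEnd ℂ) ((starRingEnd ℂ) z) n
      (PhiP α n) hdeg
    have hinv : (⅟ ((starRingEnd ℂ) z) : ℂ) = w := by
      rw [hw]; exact invOf_eq_inv _
    rw [hinv] at h
    have heval : (PhiStarP α n).eval w =
        Polynomial.eval₂ (starRingEnd ℂ) w (Polynomial.reflect n (PhiP α n)) := by
      rw [PhiStarP, Polynomial.reflect_map, Polynomial.eval_map]
    have hr : Polynomial.eval₂ (starRingEnd ℂ) ((starRingEnd ℂ) z) (PhiP α n) =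
        (starRingEnd ℂ) ((PhiP α n).eval z) := Polynomial.eval₂_at_apply _ _
    have h' : (PhiP α n).eval z = (starRingEnd ℂ)
        (Polynomial.eval₂ (starRingEnd ℂ) w (Polynomial.reflect n (PhiP α n)) *
          (starRingEnd ℂ) z ^ n) := by
      rw [h, hr, Complex.conj_conj]
    rw [heval, h', map_mul, map_pow, Complex.conj_conj,
      mul_div_assoc, div_self (pow_ne_zero _ hz0), mul_one]
  have := ((Complex.continuous_conj.tendsto _).comp (hS w hwabs))
  refine this.congr ?_
  intro n
  simp [Function.comp, key n]
end

section
/- Assume the Verblunsky coefficients satisfy the decay hypothesis (1.5), and define R_n(z) = conj(α_n) Φ_n*(z) − S(z) Σ_{ℓ=1}^L conj(C_ℓ) conj(b_ℓ)^n for |z| ≤ 1. Then there exist Δ_1 ∈ (0,1) and C > 0 such that: (i) sup_{|z| ≤ 1} |R_n(z)| ≤ C (bΔ_1)^n for all n; (ii) for z in the annulus 𝔸 = {z : bΔ_1 < |z| < 1}, the series s_n(z) = Σ_{j=0}^∞ z^{-j-1} R_{n+j}(z) converges uniformly on compact subsets of 𝔸 and defines an analytic function on 𝔸; (iii) |s_n(z)|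 ≤ C (bΔ_1)^n (|z| − bΔ_1)^{-1} for all n and all z ∈ 𝔸; (iv) s_{n+1}(z) = z s_n(z) − R_n(z) for all n and all z ∈ 𝔸. -/
open Polynomial Filter Topology

/-- `R_n(z) = conj(α_n) Φ_n^*(z) - S(z) Σ_ℓ conj(C_ℓ) conj(b_ℓ)^n`. -/
noncomputable def Rfun (α : ℕ → ℂ) (S : ℂ → ℂ) {L : ℕ} (Cs bs : Fin L → ℂ)
    (n : ℕ) (z : ℂ) : ℂ :=
  (starRingEnd ℂ) (α n) * (PhiStarP α n).eval z -
    S z * ∑ ℓ : Fin L, (starRingEnd ℂ) (Cs ℓ) * ((starRingEnd ℂ) (bs ℓ)) ^ n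

/-- `s_n(z) = Σ_{j=0}^∞ z^{-j-1} R_{n+j}(z)`. -/
noncomputable def sfun (α : ℕ → ℂ) (S : ℂ → ℂ) {L : ℕ} (Cs bs : Fin L → ℂ)
    (n : ℕ) (z : ℂ) : ℂ :=
  ∑' j : ℕ, (z ^ (j + 1))⁻¹ * Rfun α S Cs bs (n + j) z

lemma reflect_reflect' (N : ℕ) (f : Polynomial ℂ) : reflect N (reflect N f) = f := by
  ext i; simp [revAt_invol]

lemma natDegree_reflect_le {N : ℕ} {f : Polynomial ℂ} (h : f.natDegree ≤ N) :
    (reflect N f).natDegree ≤ N := by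
  rw [natDegree_le_iff_coeff_eq_zero] at h ⊢
  intro m hm
  rw [coeff_reflect]
  rcases le_or_gt m N with h'|h'
  · omega
  · rw [revAt_eq_self_of_lt h']; exact h m hm

lemma natDegree_PhiP (α : ℕ → ℂ) (n : ℕ) : (PhiP α n).natDegree ≤ n := by
  induction n with
  | zero => simp [PhiP]
  | succ n ih =>
    rw [PhiP]
    refine le_trans (natDegree_sub_le _ _) (max_le ?_ ?_)
    · refine le_trans natDegree_mul_le ?_
      have : (X : Polynomial ℂ).natDegree ≤ 1 := natDegree_X_le
      omega
    · refine le_trans natDegree_mul_le ?_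
      simp only [natDegree_C, zero_add]
      exact le_trans (natDegree_reflect_le (le_trans natDegree_map_le ih)) (by omega)

lemma PhiStarP_succ (α : ℕ → ℂ) (n : ℕ) :
    PhiStarP α (n + 1) = PhiStarP α n - Polynomial.C (α n) * (X * PhiP α n) := by
  have hdeg : (PhiP α n).natDegree ≤ n := natDegree_PhiP α n
  have hdegm : ((PhiP α n).map (starRingEnd ℂ)).natDegree ≤ n :=
    le_trans natDegree_map_le hdeg
  have key : ∀ Q : Polynomial ℂ, Q.natDegree ≤ n → reflect (n + 1) (X * Q) = reflect n Q := by
    intro Q hQ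
    have := reflect_mul (X : Polynomial ℂ) Q (F := 1) (G := n) natDegree_X_le hQ
    rw [add_comm] at this
    simpa using this
  have key2 : reflect (n + 1) (reflect n (PhiP α n)) = X * PhiP α n := by
    have h1 : reflect (n+1) (X * PhiP α n) = reflect n (PhiP α n) := key _ hdeg
    calc reflect (n + 1) (reflect n (PhiP α n))
        = reflect (n+1) (reflect (n+1) (X * PhiP α n)) := by rw [h1]
      _ = X * PhiP α n := reflect_reflect' _ _
  show reflect (n+1) (Polynomial.map (starRingEnd ℂ) (X * PhiP α n -
      Polynomial.C ((starRingEnd ℂ) (α n)) * reflect n ((PhiP α n).map (starRingEnd ℂ)))) = _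
  rw [Polynomial.map_sub, Polynomial.map_mul, Polynomial.map_mul, map_C, Polynomial.map_X]
  have hcc : (starRingEnd ℂ) ((starRingEnd ℂ) (α n)) = α n := Complex.conj_conj _
  have hid : Polynomial.map (starRingEnd ℂ)
      (Polynomial.map (starRingEnd ℂ) (PhiP α n)) = PhiP α n := by
    rw [Polynomial.map_map]
    have : (starRingEnd ℂ).comp (starRingEnd ℂ) = RingHom.id ℂ := RingHom.ext fun x => by simp
    rw [this, Polynomial.map_id]
  rw [hcc, ← reflect_map, hid]
  rw [reflect_sub, key _ hdegm, reflect_C_mul, key2]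
  rfl

lemma eval_PhiP_succ (α : ℕ → ℂ) (n : ℕ) (z : ℂ) :
    (PhiP α (n+1)).eval z = z * (PhiP α n).eval z
      - (starRingEnd ℂ) (α n) * (PhiStarP α n).eval z := by
  rw [show PhiP α (n+1) = X * PhiP α n - Polynomial.C ((starRingEnd ℂ) (α n)) * PhiStarP α n
    from rfl]
  simp

lemma eval_PhiStarP_succ (α : ℕ → ℂ) (n : ℕ) (z : ℂ) :
    (PhiStarP α (n+1)).eval z = (PhiStarP α n).eval z - α n * (z * (PhiP α n).eval z) := by
  rw [PhiStarP_succ]; simp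

lemma Phi_le (α : ℕ → ℂ) (c b : ℝ) (hb0 : 0 ≤ b) (hb1 : b < 1) (hc : 0 ≤ c)
    (hα : ∀ n, ‖α n‖ ≤ c * b ^ n) (z : ℂ) (hz : ‖z‖ ≤ 1) (n : ℕ) :
    ‖(PhiP α n).eval z‖ ≤ Real.exp (c * (1 - b)⁻¹) ∧
      ‖(PhiStarP α n).eval z‖ ≤ Real.exp (c * (1 - b)⁻¹) := by
  have hsum : ∀ m : ℕ, (∑ k ∈ Finset.range m, ‖α k‖) ≤ c * (1 - b)⁻¹ := by
    intro m
    calc ∑ k ∈ Finset.range m, ‖α k‖ ≤ ∑ k ∈ Finset.range m, c * b ^ k :=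
          Finset.sum_le_sum fun k _ => hα k
      _ = c * ∑ k ∈ Finset.range m, b ^ k := by rw [Finset.mul_sum]
      _ ≤ c * (1 - b)⁻¹ := by
          refine mul_le_mul_of_nonneg_left ?_ hc
          calc (∑ k ∈ Finset.range m, b ^ k) ≤ ∑' k : ℕ, b ^ k :=
                Summable.sum_le_tsum _ (fun k _ => pow_nonneg hb0 k)
                  (summable_geometric_of_lt_one hb0 hb1)
            _ = (1 - b)⁻¹ := tsum_geometric_of_lt_one hb0 hb1
  have main : ∀ m : ℕ,
      ‖(PhiP α m).eval z‖ ≤ Real.exp (∑ k ∈ Finset.range m, ‖α k‖) ∧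
      ‖(PhiStarP α m).eval z‖ ≤
        Real.exp (∑ k ∈ Finset.range m, ‖α k‖) := by
    intro m
    induction m with
    | zero =>
      constructor <;> simp [PhiP, PhiStarP]
    | succ m ih =>
      obtain ⟨ih1, ih2⟩ := ih
      set E := Real.exp (∑ k ∈ Finset.range m, ‖α k‖) with hE
      have hE0 : 0 < E := Real.exp_pos _
      have hstep : E * (1 + ‖α m‖) ≤
          Real.exp (∑ k ∈ Finset.range (m+1), ‖α k‖) := by
        rw [Finset.sum_range_succ, Real.exp_add]
        refine mul_le_mul_of_nonneg_left ?_ hE0.le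
        have := Real.add_one_le_exp (‖α m‖)
        linarith
      have ha0 : (0:ℝ) ≤ ‖α m‖ := norm_nonneg _
      constructor
      · rw [eval_PhiP_succ]
        calc ‖z * (PhiP α m).eval z - (starRingEnd ℂ) (α m) * (PhiStarP α m).eval z‖
            ≤ ‖z * (PhiP α m).eval z‖ +
              ‖(starRingEnd ℂ) (α m) * (PhiStarP α m).eval z‖ := by
              exact norm_sub_le _ _
          _ = ‖z‖ * ‖(PhiP α m).eval z‖ +
              ‖α m‖ * ‖(PhiStarP α m).eval z‖ := by
              simp [map_mul]
          _ ≤ 1 * E + ‖α m‖ * E := by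
              have h1 : ‖z‖ * ‖(PhiP α m).eval z‖ ≤ 1 * E :=
                mul_le_mul hz ih1 (norm_nonneg _) zero_le_one
              have h2 : ‖α m‖ * ‖(PhiStarP α m).eval z‖ ≤
                  ‖α m‖ * E := mul_le_mul_of_nonneg_left ih2 ha0
              linarith
          _ = E * (1 + ‖α m‖) := by ring
          _ ≤ _ := hstep
      · rw [eval_PhiStarP_succ]
        calc ‖(PhiStarP α m).eval z - α m * (z * (PhiP α m).eval z)‖
            ≤ ‖(PhiStarP α m).eval z‖ +
              ‖α m‖ * (‖z‖ * ‖(PhiP α m).eval z‖) := by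
              refine le_trans (norm_sub_le _ _) ?_
              simp [map_mul]
          _ ≤ E + ‖α m‖ * (1 * E) := by
              have h1 : ‖z‖ * ‖(PhiP α m).eval z‖ ≤ 1 * E :=
                mul_le_mul hz ih1 (norm_nonneg _) zero_le_one
              have h2 := mul_le_mul_of_nonneg_left h1 ha0
              linarith
          _ = E * (1 + ‖α m‖) := by ring
          _ ≤ _ := hstep
  obtain ⟨h1, h2⟩ := main n
  exact ⟨h1.trans (Real.exp_le_exp.mpr (hsum n)), h2.trans (Real.exp_le_exp.mpr (hsum n))⟩

lemma geom_partial_le (b : ℝ) (hb0 : 0 ≤ b) (hb1 : b < 1) (m : ℕ) :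
    (∑ k ∈ Finset.range m, b ^ k) ≤ (1 - b)⁻¹ :=
  le_trans (Summable.sum_le_tsum _ (fun k _ => pow_nonneg hb0 k)
    (summable_geometric_of_lt_one hb0 hb1)) (tsum_geometric_of_lt_one hb0 hb1).le

lemma S_sub_PhiStar (α : ℕ → ℂ) (c b : ℝ) (hb0 : 0 < b) (hb1 : b < 1) (hc : 0 ≤ c)
    (hα : ∀ n, ‖α n‖ ≤ c * b ^ n)
    (S : ℂ → ℂ) (z : ℂ) (hz : ‖z‖ ≤ 1)
    (hS : Tendsto (fun n : ℕ => (PhiStarP α n).eval z) atTop (nhds (S z))) (n : ℕ) :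
    ‖S z - (PhiStarP α n).eval z‖ ≤
      c * Real.exp (c * (1 - b)⁻¹) * (1 - b)⁻¹ * b ^ n := by
  set M := Real.exp (c * (1 - b)⁻¹) with hMdef
  have hM0 : 0 < M := Real.exp_pos _
  have hdiff : ∀ k, ‖(PhiStarP α (k+1)).eval z - (PhiStarP α k).eval z‖ ≤
      c * M * b ^ k := by
    intro k
    have he : (PhiStarP α (k+1)).eval z - (PhiStarP α k).eval z
        = -(α k * (z * (PhiP α k).eval z)) := by
      rw [eval_PhiStarP_succ]; ring
    rw [he, norm_neg, norm_mul, norm_mul]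
    have h1 := (Phi_le α c b hb0.le hb1 hc hα z hz k).1
    have h2 := hα k
    have hbk : (0:ℝ) ≤ b ^ k := pow_nonneg hb0.le k
    calc ‖α k‖ * (‖z‖ * ‖(PhiP α k).eval z‖)
        ≤ (c * b ^ k) * (1 * M) := by
          refine mul_le_mul h2 ?_ (by positivity) (by positivity)
          exact mul_le_mul hz h1 (norm_nonneg _) zero_le_one
      _ = c * M * b ^ k := by ring
  have htel : ∀ m : ℕ, ‖(PhiStarP α (n+m)).eval z - (PhiStarP α n).eval z‖ ≤
      c * M * (1 - b)⁻¹ * b ^ n := by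
    intro m
    have hd := dist_le_range_sum_dist (fun k => (PhiStarP α (n+k)).eval z) m
    simp only [Complex.dist_eq] at hd
    have h0 : ‖(PhiStarP α (n+m)).eval z - (PhiStarP α n).eval z‖
        = ‖(PhiStarP α (n+0)).eval z - (PhiStarP α (n+m)).eval z‖ := by
      rw [← norm_neg]; ring_nf
    calc ‖(PhiStarP α (n+m)).eval z - (PhiStarP α n).eval z‖
        ≤ ∑ i ∈ Finset.range m, ‖(PhiStarP α (n+i)).eval z -
            (PhiStarP α (n+i+1)).eval z‖ := by rw [h0]; exact hd
      _ = ∑ i ∈ Finset.range m, ‖(PhiStarP α (n+i+1)).eval z -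
            (PhiStarP α (n+i)).eval z‖ := by
          refine Finset.sum_congr rfl fun i _ => ?_
          rw [← norm_neg]; ring_nf
      _ ≤ ∑ i ∈ Finset.range m, c * M * b ^ (n+i) :=
          Finset.sum_le_sum fun i _ => hdiff (n+i)
      _ = c * M * b ^ n * ∑ i ∈ Finset.range m, b ^ i := by
          rw [Finset.mul_sum]; exact Finset.sum_congr rfl fun i _ => by rw [pow_add]; ring
      _ ≤ c * M * b ^ n * (1 - b)⁻¹ := by
          refine mul_le_mul_of_nonneg_left (geom_partial_le b hb0.le hb1 m) (by positivity)
      _ = c * M * (1 - b)⁻¹ * b ^ n := by ring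
  have hlim : Tendsto (fun m : ℕ => (PhiStarP α (n+m)).eval z - (PhiStarP α n).eval z)
      atTop (nhds (S z - (PhiStarP α n).eval z)) := by
    have h1 : Tendsto (fun m : ℕ => (PhiStarP α (n+m)).eval z) atTop (nhds (S z)) := by
      have := hS.comp (tendsto_add_atTop_nat n)
      simpa [Function.comp_def, Nat.add_comm] using this
    exact h1.sub tendsto_const_nhds
  have habs : Tendsto (fun m : ℕ => ‖(PhiStarP α (n+m)).eval z -
      (PhiStarP α n).eval z‖) atTop (nhds (‖S z - (PhiStarP α n).eval z‖)) :=
    (continuous_norm.tendsto _).comp hlim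
  exact le_of_tendsto habs (Filter.Eventually.of_forall htel)

set_option maxHeartbeats 1000000 in
theorem stmt_12 (α : ℕ → ℂ) (hα : ∀ n, ‖α n‖ < 1)
    (L : ℕ) (hL : 1 ≤ L) (b Δ A : ℝ) (bs Cs : Fin L → ℂ)
    (hb0 : 0 < b) (hb1 : b < 1) (hinj : Function.Injective bs)
    (habs : ∀ ℓ, ‖bs ℓ‖ = b) (hCs : ∀ ℓ, Cs ℓ ≠ 0)
    (hΔ0 : 0 < Δ) (hΔ1 : Δ < 1) (hA : 0 < A)
    (hdecay : ∀ n : ℕ,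
      ‖α n - ∑ ℓ : Fin L, Cs ℓ * bs ℓ ^ n‖ ≤ A * (b * Δ) ^ n)
    (S : ℂ → ℂ)
    (hS : ∀ z : ℂ, ‖z‖ < 1 / b →
      Tendsto (fun n : ℕ => (PhiStarP α n).eval z) atTop (nhds (S z)))
 :
    ∃ Δ₁ : ℝ, 0 < Δ₁ ∧ Δ₁ < 1 ∧ ∃ C : ℝ, 0 < C ∧
      (∀ n : ℕ, ∀ z : ℂ, ‖z‖ ≤ 1 →
        ‖Rfun α S Cs bs n z‖ ≤ C * (b * Δ₁) ^ n) ∧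
      (∀ n : ℕ, ∀ z : ℂ, b * Δ₁ < ‖z‖ → ‖z‖ < 1 →
        Summable (fun j : ℕ => (z ^ (j + 1))⁻¹ * Rfun α S Cs bs (n + j) z)) ∧
      (∀ n : ℕ, ∀ K : Set ℂ,
        K ⊆ {z : ℂ | b * Δ₁ < ‖z‖ ∧ ‖z‖ < 1} → IsCompact K →
        TendstoUniformlyOn
          (fun (N : ℕ) (z : ℂ) =>
            ∑ j ∈ Finset.range N, (z ^ (j + 1))⁻¹ * Rfun α S Cs bs (n + j) z)
          (sfun α S Cs bs n) atTop K) ∧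
      (∀ n : ℕ, AnalyticOnNhd ℂ (sfun α S Cs bs n)
        {z : ℂ | b * Δ₁ < ‖z‖ ∧ ‖z‖ < 1}) ∧
      (∀ n : ℕ, ∀ z : ℂ, b * Δ₁ < ‖z‖ → ‖z‖ < 1 →
        ‖sfun α S Cs bs n z‖ ≤
          C * (b * Δ₁) ^ n * (‖z‖ - b * Δ₁)⁻¹) ∧
      (∀ n : ℕ, ∀ z : ℂ, b * Δ₁ < ‖z‖ → ‖z‖ < 1 →
        sfun α S Cs bs (n + 1) z = z * sfun α S Cs bs n z - Rfun α S Cs bs n z) := by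
  classical
  set c : ℝ := A + ∑ ℓ : Fin L, ‖Cs ℓ‖ with hcdef
  have hCsum0 : (0:ℝ) ≤ ∑ ℓ : Fin L, ‖Cs ℓ‖ :=
    Finset.sum_nonneg fun _ _ => norm_nonneg _
  have hc0 : 0 < c := by linarith
  have hTn : ∀ n : ℕ, ‖∑ ℓ : Fin L, Cs ℓ * bs ℓ ^ n‖ ≤
      (∑ ℓ : Fin L, ‖Cs ℓ‖) * b ^ n := by
    intro n
    refine le_trans (norm_sum_le _ _) ?_
    rw [Finset.sum_mul]
    refine Finset.sum_le_sum fun ℓ _ => ?_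
    rw [norm_mul, norm_pow, habs ℓ]
  have hαle : ∀ n, ‖α n‖ ≤ c * b ^ n := by
    intro n
    have h1 := hdecay n
    have h2 := hTn n
    have hbn : (0:ℝ) ≤ b ^ n := pow_nonneg hb0.le n
    have hΔb : (b * Δ) ^ n ≤ b ^ n := by
      refine pow_le_pow_left₀ (by positivity) ?_ n
      nlinarith
    calc ‖α n‖
        = ‖(α n - ∑ ℓ : Fin L, Cs ℓ * bs ℓ ^ n) + ∑ ℓ : Fin L, Cs ℓ * bs ℓ ^ n‖ := by
          ring_nf
      _ ≤ ‖α n - ∑ ℓ : Fin L, Cs ℓ * bs ℓ ^ n‖ +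
          ‖∑ ℓ : Fin L, Cs ℓ * bs ℓ ^ n‖ := norm_add_le _ _
      _ ≤ A * (b * Δ) ^ n + (∑ ℓ : Fin L, ‖Cs ℓ‖) * b ^ n := add_le_add h1 h2
      _ ≤ A * b ^ n + (∑ ℓ : Fin L, ‖Cs ℓ‖) * b ^ n := by nlinarith
      _ = c * b ^ n := by rw [hcdef]; ring
  set M := Real.exp (c * (1 - b)⁻¹) with hMdef
  have hM0 : 0 < M := Real.exp_pos _
  have hΦs : ∀ z : ℂ, ‖z‖ ≤ 1 → ∀ n,
      ‖(PhiStarP α n).eval z‖ ≤ M :=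
    fun z hz n => (Phi_le α c b hb0.le hb1 hc0.le hαle z hz n).2
  have hzb : ∀ z : ℂ, ‖z‖ ≤ 1 → ‖z‖ < 1 / b :=
    fun z hz => lt_of_le_of_lt hz (by rw [lt_div_iff₀ hb0]; linarith)
  have hSsub : ∀ z : ℂ, ‖z‖ ≤ 1 → ∀ n,
      ‖S z - (PhiStarP α n).eval z‖ ≤ c * M * (1 - b)⁻¹ * b ^ n :=
    fun z hz n => S_sub_PhiStar α c b hb0 hb1 hc0.le hαle S z hz (hS z (hzb z hz)) n
  set Δ₁ := max Δ b with hΔ₁def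
  have hΔ₁0 : 0 < Δ₁ := lt_max_of_lt_left hΔ0
  have hΔ₁1 : Δ₁ < 1 := max_lt hΔ1 hb1
  set r := b * Δ₁ with hrdef
  have hr0 : 0 < r := mul_pos hb0 hΔ₁0
  have hr1 : r < 1 := by nlinarith
  set C := A * M + (∑ ℓ : Fin L, ‖Cs ℓ‖) * (c * M * (1 - b)⁻¹) + 1 with hCdef
  have h1b : (0:ℝ) < (1 - b)⁻¹ := inv_pos.mpr (by linarith)
  have hC0 : 0 < C := by
    have h1 : 0 < A * M := mul_pos hA hM0
    have h2 : 0 ≤ (∑ ℓ : Fin L, ‖Cs ℓ‖) * (c * M * (1 - b)⁻¹) := by positivity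
    rw [hCdef]; linarith
  -- Part (i)
  have hR : ∀ n (z : ℂ), ‖z‖ ≤ 1 → ‖Rfun α S Cs bs n z‖ ≤ C * r ^ n := by
    intro n z hz
    set T : ℂ := ∑ ℓ : Fin L, (starRingEnd ℂ) (Cs ℓ) * ((starRingEnd ℂ) (bs ℓ)) ^ n with hT
    have hTc : T = (starRingEnd ℂ) (∑ ℓ : Fin L, Cs ℓ * bs ℓ ^ n) := by
      rw [map_sum]
      exact Finset.sum_congr rfl fun ℓ _ => by rw [map_mul, map_pow]
    have hsplit : Rfun α S Cs bs n z =
        ((starRingEnd ℂ) (α n) - T) * (PhiStarP α n).eval z +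
          T * ((PhiStarP α n).eval z - S z) := by
      simp only [Rfun]; ring
    have h1 : ‖(starRingEnd ℂ) (α n) - T‖ ≤ A * (b * Δ) ^ n := by
      rw [hTc, ← map_sub, Complex.norm_conj]
      exact hdecay n
    have h2 : ‖T‖ ≤ (∑ ℓ : Fin L, ‖Cs ℓ‖) * b ^ n := by
      rw [hTc, Complex.norm_conj]; exact hTn n
    have h3 : ‖(PhiStarP α n).eval z - S z‖ ≤ c * M * (1 - b)⁻¹ * b ^ n := by
      rw [← norm_neg]
      have : -((PhiStarP α n).eval z - S z) = S z - (PhiStarP α n).eval z := by ring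
      rw [this]; exact hSsub z hz n
    have hbn : (0:ℝ) ≤ b ^ n := pow_nonneg hb0.le n
    have hrn : (0:ℝ) ≤ r ^ n := pow_nonneg hr0.le n
    have hΔr : (b * Δ) ^ n ≤ r ^ n := by
      refine pow_le_pow_left₀ (by positivity) ?_ n
      have : Δ ≤ Δ₁ := le_max_left _ _
      nlinarith
    have hbr : b ^ n * b ^ n ≤ r ^ n := by
      rw [← mul_pow]
      refine pow_le_pow_left₀ (by positivity) ?_ n
      have : b ≤ Δ₁ := le_max_right _ _
      nlinarith
    calc ‖Rfun α S Cs bs n z‖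
        ≤ ‖(starRingEnd ℂ) (α n) - T‖ * ‖(PhiStarP α n).eval z‖ +
          ‖T‖ * ‖(PhiStarP α n).eval z - S z‖ := by
          rw [hsplit]
          refine le_trans (norm_add_le _ _) ?_
          rw [norm_mul, norm_mul]
      _ ≤ (A * (b * Δ) ^ n) * M +
          ((∑ ℓ : Fin L, ‖Cs ℓ‖) * b ^ n) * (c * M * (1 - b)⁻¹ * b ^ n) := by
          refine add_le_add (mul_le_mul h1 (hΦs z hz n) (norm_nonneg _)
            (by positivity)) (mul_le_mul h2 h3 (norm_nonneg _) (by positivity))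
      _ = A * M * (b * Δ) ^ n +
          (∑ ℓ : Fin L, ‖Cs ℓ‖) * (c * M * (1 - b)⁻¹) * (b ^ n * b ^ n) := by ring
      _ ≤ A * M * r ^ n + (∑ ℓ : Fin L, ‖Cs ℓ‖) * (c * M * (1 - b)⁻¹) * r ^ n := by
          refine add_le_add (mul_le_mul_of_nonneg_left hΔr (by positivity)) ?_
          exact mul_le_mul_of_nonneg_left hbr (by positivity)
      _ ≤ C * r ^ n := by rw [hCdef]; nlinarith
  -- term norm bound
  have hterm : ∀ (m j : ℕ) (z : ℂ), r < ‖z‖ → ‖z‖ < 1 →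
      ‖(z ^ (j + 1))⁻¹ * Rfun α S Cs bs (m + j) z‖ ≤
        C * r ^ (m + j) * ((‖z‖) ^ (j + 1))⁻¹ := by
    intro m j z hz1 hz2
    have hz0 : (0:ℝ) < ‖z‖ := lt_trans hr0 hz1
    rw [norm_mul, norm_inv, norm_pow]
    calc ((‖z‖) ^ (j+1))⁻¹ * ‖Rfun α S Cs bs (m+j) z‖
        ≤ ((‖z‖) ^ (j+1))⁻¹ * (C * r ^ (m+j)) :=
          mul_le_mul_of_nonneg_left (hR (m+j) z hz2.le) (by positivity)
      _ = C * r ^ (m + j) * ((‖z‖) ^ (j + 1))⁻¹ := by ring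
  have hgeom_eq : ∀ (m : ℕ) (δ : ℝ), 0 < δ →
      (fun j : ℕ => C * r ^ (m + j) * (δ ^ (j + 1))⁻¹) =
        (fun j : ℕ => (C * r ^ m * δ⁻¹) * (r / δ) ^ j) := by
    intro m δ hδ
    funext j
    rw [pow_add, div_pow, pow_succ]
    field_simp
  have hsumu : ∀ (m : ℕ) (δ : ℝ), r < δ →
      Summable (fun j : ℕ => C * r ^ (m + j) * (δ ^ (j + 1))⁻¹) := by
    intro m δ hδ
    have hδ0 : (0:ℝ) < δ := lt_trans hr0 hδ
    rw [hgeom_eq m δ hδ0]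
    exact (summable_geometric_of_lt_one (by positivity) ((div_lt_one hδ0).mpr hδ)).mul_left _
  have htsumu : ∀ (m : ℕ) (δ : ℝ), r < δ →
      (∑' j : ℕ, C * r ^ (m + j) * (δ ^ (j + 1))⁻¹) = C * r ^ m * (δ - r)⁻¹ := by
    intro m δ hδ
    have hδ0 : (0:ℝ) < δ := lt_trans hr0 hδ
    have hne : δ - r ≠ 0 := ne_of_gt (by linarith)
    rw [hgeom_eq m δ hδ0, tsum_mul_left,
      tsum_geometric_of_lt_one (by positivity) ((div_lt_one hδ0).mpr hδ)]
    have h1 : (1 - r / δ) = (δ - r) / δ := by field_simp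
    rw [h1, inv_div]
    field_simp
  -- part (ii)
  have hsummf : ∀ (n : ℕ) (z : ℂ), r < ‖z‖ → ‖z‖ < 1 →
      Summable (fun j : ℕ => (z ^ (j + 1))⁻¹ * Rfun α S Cs bs (n + j) z) := by
    intro n z hz1 hz2
    exact Summable.of_norm_bounded (hsumu n (‖z‖) hz1)
      (fun j => hterm n j z hz1 hz2)
  -- part (iii)
  have hunif : ∀ (n : ℕ) (K : Set ℂ),
      K ⊆ {z : ℂ | r < ‖z‖ ∧ ‖z‖ < 1} → IsCompact K →
      TendstoUniformlyOn
        (fun (N : ℕ) (z : ℂ) => ∑ j ∈ Finset.range N, (z ^ (j + 1))⁻¹ * Rfun α S Cs bs (n + j) z)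
        (sfun α S Cs bs n) atTop K := by
    intro n K hKsub hKc
    rcases K.eq_empty_or_nonempty with rfl | ⟨w, hw⟩
    · exact tendstoUniformlyOn_empty
    · obtain ⟨z₀, hz₀K, hmin⟩ := hKc.exists_isMinOn ⟨w, hw⟩
        continuous_norm.continuousOn
      have hδr : r < ‖z₀‖ := (hKsub hz₀K).1
      have hδ0 : (0:ℝ) < ‖z₀‖ := lt_trans hr0 hδr
      have hres := tendstoUniformlyOn_tsum_nat
        (f := fun (j : ℕ) (z : ℂ) => (z ^ (j + 1))⁻¹ * Rfun α S Cs bs (n + j) z)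
        (hsumu n (‖z₀‖) hδr) (s := K) ?_
      · exact hres
      · intro j x hx
        refine le_trans (hterm n j x (hKsub hx).1 (hKsub hx).2) ?_
        have hδx : ‖z₀‖ ≤ ‖x‖ := hmin hx
        gcongr
  -- openness and differentiability of S
  have hUopen : IsOpen {z : ℂ | r < ‖z‖ ∧ ‖z‖ < 1} := by
    have he : {z : ℂ | r < ‖z‖ ∧ ‖z‖ < 1}
        = (fun z : ℂ => ‖z‖) ⁻¹' Set.Ioo r 1 := rfl
    rw [he]; exact isOpen_Ioo.preimage continuous_norm
  have hBopen : IsOpen {z : ℂ | ‖z‖ < 1} := by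
    have he : {z : ℂ | ‖z‖ < 1} = (fun z : ℂ => ‖z‖) ⁻¹' Set.Iio 1 := rfl
    rw [he]; exact isOpen_Iio.preimage continuous_norm
  have hSdiff : DifferentiableOn ℂ S {z : ℂ | ‖z‖ < 1} := by
    have htu : TendstoUniformlyOn (fun (n : ℕ) (z : ℂ) => (PhiStarP α n).eval z) S atTop
        {z : ℂ | ‖z‖ ≤ 1} := by
      rw [Metric.tendstoUniformlyOn_iff]
      intro ε hε
      have hten : Tendsto (fun n : ℕ => c * M * (1 - b)⁻¹ * b ^ n) atTop (nhds 0) := by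
        have := (tendsto_pow_atTop_nhds_zero_of_lt_one hb0.le hb1).const_mul (c * M * (1 - b)⁻¹)
        simpa using this
      filter_upwards [hten.eventually (gt_mem_nhds hε)] with n hn z hzK
      rw [Complex.dist_eq]
      exact lt_of_le_of_lt (hSsub z hzK n) hn
    have hlu := (htu.tendstoLocallyUniformlyOn).mono
      (fun z (hz : ‖z‖ < 1) => le_of_lt hz)
    exact hlu.differentiableOn (Filter.Eventually.of_forall fun n =>
      (Polynomial.differentiable _).differentiableOn) hBopen
  have hUB : {z : ℂ | r < ‖z‖ ∧ ‖z‖ < 1} ⊆ {z : ℂ | ‖z‖ < 1} :=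
    fun z hz => hz.2
  have hRdiff : ∀ m, DifferentiableOn ℂ (fun z => Rfun α S Cs bs m z)
      {z : ℂ | r < ‖z‖ ∧ ‖z‖ < 1} := by
    intro m
    simp only [Rfun]
    refine DifferentiableOn.sub ?_ ?_
    · exact ((differentiable_const _).mul (Polynomial.differentiable _)).differentiableOn
    · exact (hSdiff.mono hUB).mul (differentiableOn_const _)
  -- part (iv)
  have hanalytic : ∀ n, AnalyticOnNhd ℂ (sfun α S Cs bs n)
      {z : ℂ | r < ‖z‖ ∧ ‖z‖ < 1} := by
    intro n
    have htlu : TendstoLocallyUniformlyOn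
        (fun (N : ℕ) (z : ℂ) => ∑ j ∈ Finset.range N, (z ^ (j + 1))⁻¹ * Rfun α S Cs bs (n + j) z)
        (sfun α S Cs bs n) atTop {z : ℂ | r < ‖z‖ ∧ ‖z‖ < 1} :=
      (tendstoLocallyUniformlyOn_iff_forall_isCompact hUopen).mpr
        (fun K hK hKc => hunif n K hK hKc)
    have hdiffN : ∀ N : ℕ, DifferentiableOn ℂ
        (fun z => ∑ j ∈ Finset.range N, (z ^ (j + 1))⁻¹ * Rfun α S Cs bs (n + j) z)
        {z : ℂ | r < ‖z‖ ∧ ‖z‖ < 1} := by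
      intro N
      refine DifferentiableOn.fun_sum fun j _ => ?_
      refine DifferentiableOn.mul ?_ (hRdiff (n + j))
      refine DifferentiableOn.inv ((differentiable_pow _).differentiableOn) ?_
      intro x hx
      have hxne : x ≠ 0 := by
        intro h
        have : (0:ℝ) < ‖x‖ := lt_trans hr0 hx.1
        rw [h] at this; simp at this
      exact pow_ne_zero _ hxne
    exact (htlu.differentiableOn (Filter.Eventually.of_forall hdiffN) hUopen).analyticOnNhd hUopen
  -- part (v)
  have hsbound : ∀ n (z : ℂ), r < ‖z‖ → ‖z‖ < 1 →
      ‖sfun α S Cs bs n z‖ ≤ C * r ^ n * (‖z‖ - r)⁻¹ := by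
    intro n z hz1 hz2
    have hsumn : Summable (fun j : ℕ => ‖(z ^ (j + 1))⁻¹ * Rfun α S Cs bs (n + j) z‖) :=
      Summable.of_nonneg_of_le (fun j => norm_nonneg _) (fun j => hterm n j z hz1 hz2)
        (hsumu n _ hz1)
    calc ‖sfun α S Cs bs n z‖
        = ‖∑' j : ℕ, (z ^ (j + 1))⁻¹ * Rfun α S Cs bs (n + j) z‖ := by
          rfl
      _ ≤ ∑' j : ℕ, ‖(z ^ (j + 1))⁻¹ * Rfun α S Cs bs (n + j) z‖ :=
          norm_tsum_le_tsum_norm hsumn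
      _ ≤ ∑' j : ℕ, C * r ^ (n + j) * ((‖z‖) ^ (j + 1))⁻¹ :=
          Summable.tsum_le_tsum (fun j => hterm n j z hz1 hz2) hsumn (hsumu n _ hz1)
      _ = C * r ^ n * (‖z‖ - r)⁻¹ := htsumu n _ hz1
  -- part (vi)
  have hrec : ∀ n (z : ℂ), r < ‖z‖ → ‖z‖ < 1 →
      sfun α S Cs bs (n + 1) z = z * sfun α S Cs bs n z - Rfun α S Cs bs n z := by
    intro n z hz1 hz2
    have hz0 : z ≠ 0 := by
      intro h
      have : (0:ℝ) < ‖z‖ := lt_trans hr0 hz1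
      rw [h] at this; simp at this
    have hsm := hsummf n z hz1 hz2
    have h0 : sfun α S Cs bs n z = (z ^ (0 + 1))⁻¹ * Rfun α S Cs bs (n + 0) z +
        ∑' j : ℕ, (z ^ (j + 1 + 1))⁻¹ * Rfun α S Cs bs (n + (j + 1)) z := by
      exact hsm.tsum_eq_zero_add
    have hsplit0 : (∑' j : ℕ, (z ^ (j + 1 + 1))⁻¹ * Rfun α S Cs bs (n + (j + 1)) z)
        = sfun α S Cs bs n z - (z ^ (0 + 1))⁻¹ * Rfun α S Cs bs (n + 0) z := by
      rw [h0]; ring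
    calc sfun α S Cs bs (n + 1) z
        = ∑' j : ℕ, (z ^ (j + 1))⁻¹ * Rfun α S Cs bs ((n + 1) + j) z := rfl
      _ = ∑' j : ℕ, z * ((z ^ (j + 1 + 1))⁻¹ * Rfun α S Cs bs (n + (j + 1)) z) := by
          refine tsum_congr fun j => ?_
          have h2 : ((z : ℂ) ^ (j + 1 + 1))⁻¹ = (z ^ (j + 1))⁻¹ * z⁻¹ := by
            rw [pow_succ, mul_inv]
          have h3 : z * ((z : ℂ) ^ (j + 1 + 1))⁻¹ = (z ^ (j + 1))⁻¹ := by
            rw [h2, mul_comm ((z ^ (j+1))⁻¹) (z⁻¹), ← mul_assoc, mul_inv_cancel₀ hz0, one_mul]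
          rw [show (n + 1) + j = n + (j + 1) by omega, ← mul_assoc, h3]
      _ = z * ∑' j : ℕ, (z ^ (j + 1 + 1))⁻¹ * Rfun α S Cs bs (n + (j + 1)) z := by
          rw [tsum_mul_left]
      _ = z * (sfun α S Cs bs n z - (z ^ (0 + 1))⁻¹ * Rfun α S Cs bs (n + 0) z) := by
          rw [hsplit0]
      _ = z * sfun α S Cs bs n z - Rfun α S Cs bs n z := by
          rw [mul_sub]
          congr 1
          rw [zero_add, pow_one, ← mul_assoc, mul_inv_cancel₀ hz0, one_mul, Nat.add_zero]
  exact ⟨Δ₁, hΔ₁0, hΔ₁1, C, hC0, hR, hsummf, hunif, hanalytic, hsbound, hrec⟩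
end
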